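/- Let f: Q → P² be a conic bundle given as the zero locus in P²×P² of a (2,2)-form ∑ a_ij(x) y_i y_j with symmetric matrix A(x) of quadratic forms, and suppose rank A(x) = 2 for all x on the discriminant curve Γ = {det A = 0}. If at a point x ∈ Γ the matrix A(x) is diag(1,1,0) in suitable coordinates, then the fibre p⁻¹(x) contains a singular point of Q if and only if the entry a₃₃ lies in m², where m is the maximal ideal of the local ring of P² at x; moreover in that case Γ is singular at x. Consequently the restriction of the first projection to Sing(Q) maps bijectively onto Sing(Γ). -/

import Mathlib

open MvPolynomial

noncomputable section

/-- The (2,2) form `∑ aᵢⱼ(x) yᵢ yⱼ` on `ℙ² × ℙ²` associated to a symmetric 3×3 matrix of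
quadratic forms; the variables `Sum.inl` are the `x`-coordinates, `Sum.inr` the
`y`-coordinates. -/
def conicBundleForm (A : Matrix (Fin 3) (Fin 3) (MvPolynomial (Fin 3) ℂ)) :
    MvPolynomial (Fin 3 ⊕ Fin 3) ℂ :=
  ∑ i : Fin 3, ∑ j : Fin 3,
    (rename Sum.inl (A i j)) * X (Sum.inr i) * X (Sum.inr j)

/-- `(x, y)` is a singular point of the hypersurface `Q = {∑ aᵢⱼ(x) yᵢ yⱼ = 0}`:
the defining equation and all of its partial derivatives vanish there. -/
def SingQ (A : Matrix (Fin 3) (Fin 3) (MvPolynomial (Fin 3) ℂ)) (x y : Fin 3 → ℂ) : Prop :=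
  eval (Sum.elim x y) (conicBundleForm A) = 0 ∧
    ∀ v : Fin 3 ⊕ Fin 3, eval (Sum.elim x y) (pderiv v (conicBundleForm A)) = 0

/-- `x` lies on the discriminant curve `Γ = {det A = 0}`. -/
def OnGamma (A : Matrix (Fin 3) (Fin 3) (MvPolynomial (Fin 3) ℂ)) (x : Fin 3 → ℂ) : Prop :=
  eval x A.det = 0

/-- `Γ` is singular at `x`. -/
def SingGamma (A : Matrix (Fin 3) (Fin 3) (MvPolynomial (Fin 3) ℂ)) (x : Fin 3 → ℂ) : Prop :=
  eval x A.det = 0 ∧ ∀ i : Fin 3, eval x (pderiv i A.det) = 0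

/-! ### Auxiliary lemmas -/

open Matrix Module

lemma pderiv_inr_rename (k : Fin 3) (p : MvPolynomial (Fin 3) ℂ) :
    pderiv (Sum.inr k : Fin 3 ⊕ Fin 3) (rename Sum.inl p) = 0 := by
  apply pderiv_eq_zero_of_notMem_vars
  intro h
  obtain ⟨i, -, hi⟩ := mem_vars_rename _ _ h
  exact Sum.inl_ne_inr hi

lemma evalF (A : Matrix (Fin 3) (Fin 3) (MvPolynomial (Fin 3) ℂ)) (x y : Fin 3 → ℂ) :
    eval (Sum.elim x y) (conicBundleForm A)
      = ∑ i : Fin 3, ∑ j : Fin 3, eval x (A i j) * y i * y j := by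
  simp [conicBundleForm, eval_rename]

lemma evalFx (A : Matrix (Fin 3) (Fin 3) (MvPolynomial (Fin 3) ℂ)) (x y : Fin 3 → ℂ) (k : Fin 3) :
    eval (Sum.elim x y) (pderiv (Sum.inl k) (conicBundleForm A))
      = ∑ i : Fin 3, ∑ j : Fin 3, eval x (pderiv k (A i j)) * y i * y j := by
  simp only [conicBundleForm, pderiv_mul, pderiv_rename Sum.inl_injective, eval_rename,
    pderiv_X, Pi.single_apply, map_sum, map_add, _root_.map_mul]
  simp [eval_rename]

lemma evalFy (A : Matrix (Fin 3) (Fin 3) (MvPolynomial (Fin 3) ℂ)) (x y : Fin 3 → ℂ) (k : Fin 3) :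
    eval (Sum.elim x y) (pderiv (Sum.inr k) (conicBundleForm A))
      = (∑ j : Fin 3, eval x (A k j) * y j) + ∑ i : Fin 3, eval x (A i k) * y i := by
  fin_cases k <;>
  · simp [conicBundleForm, pderiv_mul, pderiv_inr_rename, eval_rename, pderiv_X,
      Pi.single_apply, Fin.sum_univ_three]
    ring

lemma jacobi (A : Matrix (Fin 3) (Fin 3) (MvPolynomial (Fin 3) ℂ)) (x : Fin 3 → ℂ) (k : Fin 3) :
    eval x (pderiv k A.det)
      = ∑ i : Fin 3, ∑ j : Fin 3,
          (A.map (eval x)).adjugate i j * eval x (pderiv k (A j i)) := by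
  rw [Matrix.det_fin_three]
  simp [pderiv_mul, Matrix.adjugate_fin_three, Matrix.map_apply, Fin.sum_univ_three]
  ring

lemma key_deriv (A : Matrix (Fin 3) (Fin 3) (MvPolynomial (Fin 3) ℂ)) (hsym : A.IsSymm)
    (x : Fin 3 → ℂ) (k : Fin 3) (α : ℂ) (y : Fin 3 → ℂ)
    (hadj : ∀ i j, (A.map (eval x)).adjugate i j = α * (y i * y j)) :
    eval x (pderiv k A.det)
      = α * ∑ i : Fin 3, ∑ j : Fin 3, eval x (pderiv k (A i j)) * y i * y j := by
  rw [jacobi]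
  simp only [Fin.sum_univ_three, hadj]
  rw [hsym.apply 0 1, hsym.apply 0 2, hsym.apply 1 2]
  ring

lemma ker_spanning (B : Matrix (Fin 3) (Fin 3) ℂ) (h : B.rank = 2) :
    ∃ y : Fin 3 → ℂ, y ≠ 0 ∧ B.mulVec y = 0 ∧
      ∀ z : Fin 3 → ℂ, B.mulVec z = 0 → ∃ c : ℂ, z = c • y := by
  have hker : finrank ℂ (LinearMap.ker B.mulVecLin) = 1 := by
    have h2 := LinearMap.finrank_range_add_finrank_ker B.mulVecLin
    rw [Matrix.rank] at h
    simp [h] at h2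
    omega
  have hne : LinearMap.ker B.mulVecLin ≠ ⊥ := by
    intro hb
    rw [hb] at hker
    simp at hker
  obtain ⟨y, hy, hy0⟩ := Submodule.exists_mem_ne_zero_of_ne_bot hne
  refine ⟨y, hy0, hy, ?_⟩
  have hspan : (ℂ ∙ y) = LinearMap.ker B.mulVecLin := by
    apply Submodule.eq_of_le_of_finrank_le
    · rwa [Submodule.span_singleton_le_iff_mem]
    · rw [hker, finrank_span_singleton hy0]
  intro z hz
  have : z ∈ (ℂ ∙ y) := by rw [hspan]; exact hz
  obtain ⟨c, hc⟩ := Submodule.mem_span_singleton.mp this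
  exact ⟨c, hc.symm⟩

lemma rank_le_one_of_minors (B : Matrix (Fin 3) (Fin 3) ℂ)
    (h : ∀ i j k l : Fin 3, B i k * B j l - B i l * B j k = 0) : B.rank ≤ 1 := by
  rw [Matrix.rank_eq_finrank_span_cols]
  by_cases hB : B = 0
  · subst hB
    have h0 : Set.range (0 : Matrix (Fin 3) (Fin 3) ℂ)ᵀ = ({0} : Set (Fin 3 → ℂ)) := by
      ext v
      constructor
      · rintro ⟨y, rfl⟩; rfl
      · rintro rfl; exact ⟨0, rfl⟩
    change finrank ℂ (Submodule.span ℂ (Set.range (0 : Matrix (Fin 3) (Fin 3) ℂ)ᵀ)) ≤ 1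
    rw [h0, Submodule.span_zero_singleton]
    simp
  · obtain ⟨⟨i0, k0⟩, h0⟩ : ∃ p : Fin 3 × Fin 3, B p.1 p.2 ≠ 0 := by
      by_contra hc
      push_neg at hc
      exact hB (by ext i j; exact hc (i, j))
    have hle : Submodule.span ℂ (Set.range Bᵀ) ≤ ℂ ∙ (Bᵀ k0) := by
      rw [Submodule.span_le]
      rintro _ ⟨l, rfl⟩
      rw [SetLike.mem_coe, Submodule.mem_span_singleton]
      have h0' : B i0 k0 ≠ 0 := h0
      refine ⟨B i0 l * (B i0 k0)⁻¹, ?_⟩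
      ext j
      simp only [Pi.smul_apply, smul_eq_mul, Matrix.transpose_apply]
      field_simp
      linear_combination -h i0 j k0 l
    have hv : Bᵀ k0 ≠ 0 := fun hc => h0 (by simpa using congrFun hc i0)
    calc finrank ℂ (Submodule.span ℂ (Set.range Bᵀ))
        ≤ finrank ℂ (ℂ ∙ (Bᵀ k0)) := Submodule.finrank_mono hle
      _ = 1 := finrank_span_singleton hv

set_option maxHeartbeats 1000000 in
lemma minor_eq_zero (B : Matrix (Fin 3) (Fin 3) ℂ) (h : B.adjugate = 0) (i j k l : Fin 3) :
    B i k * B j l - B i l * B j k = 0 := by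
  have e : ∀ a b, B.adjugate a b = 0 := fun a b => by rw [h]; rfl
  have h00 := e 0 0; have h01 := e 0 1; have h02 := e 0 2
  have h10 := e 1 0; have h11 := e 1 1; have h12 := e 1 2
  have h20 := e 2 0; have h21 := e 2 1; have h22 := e 2 2
  rw [Matrix.adjugate_fin_three] at h00 h01 h02 h10 h11 h12 h20 h21 h22
  simp at h00 h01 h02 h10 h11 h12 h20 h21 h22
  have hf : ∀ m : Fin 3, m = 0 ∨ m = 1 ∨ m = 2 := by decide
  rcases hf i with rfl|rfl|rfl <;> rcases hf j with rfl|rfl|rfl <;>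
    rcases hf k with rfl|rfl|rfl <;> rcases hf l with rfl|rfl|rfl <;>
    first
      | ring1
      | linear_combination h00 | linear_combination -h00
      | linear_combination h01 | linear_combination -h01
      | linear_combination h02 | linear_combination -h02
      | linear_combination h10 | linear_combination -h10
      | linear_combination h11 | linear_combination -h11
      | linear_combination h12 | linear_combination -h12
      | linear_combination h20 | linear_combination -h20
      | linear_combination h21 | linear_combination -h21
      | linear_combination h22 | linear_combination -h22

lemma adj_structure (B : Matrix (Fin 3) (Fin 3) ℂ) (hs : B.IsSymm) (hr : B.rank = 2)
    (y : Fin 3 → ℂ) (hy : y ≠ 0) (hmv : B.mulVec y = 0)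
    (huniq : ∀ z : Fin 3 → ℂ, B.mulVec z = 0 → ∃ c : ℂ, z = c • y) :
    ∃ α : ℂ, α ≠ 0 ∧ ∀ i j, B.adjugate i j = α * (y i * y j) := by
  have hdet : B.det = 0 := by
    rw [← Matrix.exists_mulVec_eq_zero_iff]
    exact ⟨y, hy, hmv⟩
  have hmuladj : B * B.adjugate = 0 := by
    rw [Matrix.mul_adjugate, hdet, zero_smul]
  have hcol : ∀ j : Fin 3, B.mulVec (fun i => B.adjugate i j) = 0 := by
    intro j
    ext i
    have := congrFun (congrFun hmuladj i) j
    simpa [Matrix.mulVec, Matrix.mul_apply, dotProduct] using this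
  choose β hβ using fun j => huniq _ (hcol j)
  have hentry : ∀ i j, B.adjugate i j = β j * y i := by
    intro i j
    have := congrFun (hβ j) i
    simpa using this
  have hadjsym : ∀ i j, B.adjugate j i = B.adjugate i j := by
    intro i j
    have : B.adjugate.IsSymm := by
      rw [Matrix.IsSymm, Matrix.adjugate_transpose, hs]
    exact this.apply i j
  have hadjne : B.adjugate ≠ 0 := by
    intro hc
    have := rank_le_one_of_minors B (minor_eq_zero B hc)
    omega
  obtain ⟨⟨i0, j0⟩, hne⟩ : ∃ p : Fin 3 × Fin 3, B.adjugate p.1 p.2 ≠ 0 := by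
    by_contra hc
    push_neg at hc
    exact hadjne (by ext i j; exact hc (i, j))
  rw [hentry] at hne
  have hβj0 : β j0 ≠ 0 := fun hc => hne (by rw [hc]; ring)
  have hyi0 : y i0 ≠ 0 := fun hc => hne (by rw [hc]; ring)
  have hyj0 : y j0 ≠ 0 := by
    intro hc
    have h1 : B.adjugate i0 j0 = B.adjugate j0 i0 := (hadjsym j0 i0)
    rw [hentry, hentry, hc] at h1
    exact hne (by rw [h1]; ring)
  refine ⟨β j0 * (y j0)⁻¹, by simp [hβj0, hyj0], ?_⟩
  intro i j
  have hβ' : β j * y j0 = β j0 * y j := by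
    have h1 : B.adjugate j0 j = B.adjugate j j0 := hadjsym j j0
    rw [hentry, hentry] at h1
    linear_combination h1
  rw [hentry]
  field_simp
  linear_combination y i * hβ'

lemma singQ_iff (A : Matrix (Fin 3) (Fin 3) (MvPolynomial (Fin 3) ℂ)) (hsym : A.IsSymm)
    (x y : Fin 3 → ℂ) :
    SingQ A x y ↔ ((A.map (eval x)).mulVec y = 0 ∧
      ∀ k : Fin 3, (∑ i : Fin 3, ∑ j : Fin 3, eval x (pderiv k (A i j)) * y i * y j) = 0) := by
  have hmv : ∀ k : Fin 3, ((A.map (eval x)).mulVec y) k = ∑ j : Fin 3, eval x (A k j) * y j := by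
    intro k
    simp [Matrix.mulVec, dotProduct, Matrix.map_apply]
  constructor
  · rintro ⟨-, hd⟩
    constructor
    · ext k
      have h1 := hd (Sum.inr k)
      rw [evalFy] at h1
      have h2 : ∀ i : Fin 3, eval x (A i k) = eval x (A k i) := fun i => by
        rw [hsym.apply k i]
      simp only [h2] at h1
      have h3 : (2 : ℂ) * ∑ j : Fin 3, eval x (A k j) * y j = 0 := by
        rw [two_mul]
        linear_combination h1
      rw [hmv k, Pi.zero_apply]
      have := mul_eq_zero.mp h3
      simpa using this
    · intro k
      have h1 := hd (Sum.inl k)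
      rwa [evalFx] at h1
  · rintro ⟨h1, h2⟩
    have hrow : ∀ k : Fin 3, ∑ j : Fin 3, eval x (A k j) * y j = 0 := by
      intro k
      rw [← hmv k, h1, Pi.zero_apply]
    constructor
    · rw [evalF]
      calc (∑ i : Fin 3, ∑ j : Fin 3, eval x (A i j) * y i * y j)
          = ∑ i : Fin 3, (∑ j : Fin 3, eval x (A i j) * y j) * y i := by
            refine Finset.sum_congr rfl fun i _ => ?_
            rw [Finset.sum_mul]
            exact Finset.sum_congr rfl fun j _ => by ring
        _ = 0 := by simp [hrow]
    · rintro (k | k)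
      · rw [evalFx]
        exact h2 k
      · rw [evalFy]
        have h3 : ∀ i : Fin 3, eval x (A i k) = eval x (A k i) := fun i => by
          rw [hsym.apply k i]
        simp only [h3]
        rw [hrow k]
        simp [hrow k]

theorem stmt_0 (A : Matrix (Fin 3) (Fin 3) (MvPolynomial (Fin 3) ℂ))
    (hsym : A.IsSymm)
    (hdeg : ∀ i j, (A i j).IsHomogeneous 2)
    (hrank : ∀ x : Fin 3 → ℂ, x ≠ 0 → OnGamma A x → (A.map (eval x)).rank = 2) :
    (∀ x : Fin 3 → ℂ, x ≠ 0 → OnGamma A x →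
      A.map (eval x) = Matrix.diagonal ![1, 1, 0] →
      ((∃ y : Fin 3 → ℂ, y ≠ 0 ∧ SingQ A x y) ↔
        (∀ i : Fin 3, eval x (pderiv i (A 2 2)) = 0)) ∧
      ((∀ i : Fin 3, eval x (pderiv i (A 2 2)) = 0) → SingGamma A x)) ∧
    (∀ x y : Fin 3 → ℂ, x ≠ 0 → y ≠ 0 → SingQ A x y → SingGamma A x) ∧
    (∀ x : Fin 3 → ℂ, x ≠ 0 → SingGamma A x →
      ∃ y : Fin 3 → ℂ, y ≠ 0 ∧ SingQ A x y ∧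
        ∀ y' : Fin 3 → ℂ, y' ≠ 0 → SingQ A x y' → ∃ c : ℂ, c ≠ 0 ∧ y' = c • y) := by
  refine ⟨?_, ?_, ?_⟩
  · -- Part (1)
    intro x hx hΓ hdiag
    constructor
    · constructor
      · rintro ⟨y, hy0, hsq⟩
        obtain ⟨hmv, hS⟩ := (singQ_iff A hsym x y).mp hsq
        rw [hdiag] at hmv
        have hy0' : y 0 = 0 := by
          have := congrFun hmv 0
          simpa [Matrix.mulVec_diagonal] using this
        have hy1' : y 1 = 0 := by
          have := congrFun hmv 1
          simpa [Matrix.mulVec_diagonal] using this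
        have hy2 : y 2 ≠ 0 := by
          intro hc
          apply hy0
          ext i
          fin_cases i <;> simpa [hy0', hy1', hc]
        intro k
        have h1 := hS k
        rw [Fin.sum_univ_three] at h1
        simp only [Fin.sum_univ_three, hy0', hy1'] at h1
        have h2 : eval x (pderiv k (A 2 2)) * (y 2 * y 2) = 0 := by linear_combination h1
        rcases mul_eq_zero.mp h2 with h | h
        · exact h
        · exact absurd (mul_eq_zero.mp h) (by simp [hy2])
      · intro h22
        refine ⟨![0, 0, 1], ?_, ?_⟩
        · intro hc
          have := congrFun hc 2
          simp at this
        · rw [singQ_iff A hsym]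
          constructor
          · rw [hdiag]
            funext i
            fin_cases i <;> simp [Matrix.mulVec_diagonal]
          · intro k
            simp only [Fin.sum_univ_three]
            simp [h22 k]
    · intro h22
      have hadj : ∀ i j, (A.map (eval x)).adjugate i j
          = (1 : ℂ) * ((![0, 0, 1] : Fin 3 → ℂ) i * (![0, 0, 1] : Fin 3 → ℂ) j) := by
        have hd : (Matrix.diagonal ![1,1,0] : Matrix (Fin 3) (Fin 3) ℂ)
            = !![1,0,0;0,1,0;0,0,0] := by
          ext i j
          fin_cases i <;> fin_cases j <;>
            simp [Matrix.diagonal_apply, Matrix.vecHead, Matrix.vecTail]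
        intro i j
        rw [hdiag, hd, Matrix.adjugate_fin_three]
        fin_cases i <;> fin_cases j <;> simp [Matrix.vecHead, Matrix.vecTail]
      refine ⟨hΓ, ?_⟩
      intro k
      rw [key_deriv A hsym x k 1 ![0, 0, 1] hadj]
      simp only [Fin.sum_univ_three]
      simp [h22 k]
  · -- Part (2)
    intro x y hx hy hsq
    obtain ⟨hmv, hS⟩ := (singQ_iff A hsym x y).mp hsq
    have hdetB : (A.map (eval x)).det = 0 := by
      rw [← Matrix.exists_mulVec_eq_zero_iff]
      exact ⟨y, hy, hmv⟩
    have hΓ : OnGamma A x := by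
      rw [OnGamma, RingHom.map_det]
      exact hdetB
    have hr := hrank x hx hΓ
    have hsymB : (A.map (eval x)).IsSymm := by
      rw [Matrix.IsSymm]
      ext i j
      simp [Matrix.map_apply, hsym.apply i j]
    obtain ⟨y₀, hy₀, hmv₀, huniq₀⟩ := ker_spanning _ hr
    obtain ⟨c, hc⟩ := huniq₀ y hmv
    have hcne : c ≠ 0 := by
      intro h0
      apply hy
      rw [hc, h0, zero_smul]
    have huniq : ∀ z : Fin 3 → ℂ, (A.map (eval x)).mulVec z = 0 → ∃ d : ℂ, z = d • y := by
      intro z hz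
      obtain ⟨d, hd⟩ := huniq₀ z hz
      refine ⟨d * c⁻¹, ?_⟩
      rw [hd, hc, smul_smul]
      congr 1
      field_simp
    obtain ⟨α, hα, hadj⟩ := adj_structure _ hsymB hr y hy hmv huniq
    refine ⟨hΓ, ?_⟩
    intro k
    rw [key_deriv A hsym x k α y hadj, hS k, mul_zero]
  · -- Part (3)
    intro x hx hsg
    obtain ⟨hdet, hpd⟩ := hsg
    have hΓ : OnGamma A x := hdet
    have hr := hrank x hx hΓ
    have hsymB : (A.map (eval x)).IsSymm := by
      rw [Matrix.IsSymm]
      ext i j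
      simp [Matrix.map_apply, hsym.apply i j]
    obtain ⟨y, hy, hmv, huniq⟩ := ker_spanning _ hr
    obtain ⟨α, hα, hadj⟩ := adj_structure _ hsymB hr y hy hmv huniq
    have hS : ∀ k : Fin 3,
        (∑ i : Fin 3, ∑ j : Fin 3, eval x (pderiv k (A i j)) * y i * y j) = 0 := by
      intro k
      have h1 := hpd k
      rw [key_deriv A hsym x k α y hadj] at h1
      exact (mul_eq_zero.mp h1).resolve_left hα
    refine ⟨y, hy, (singQ_iff A hsym x y).mpr ⟨hmv, hS⟩, ?_⟩
    intro y' hy' hsq'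
    obtain ⟨hmv', -⟩ := (singQ_iff A hsym x y').mp hsq'
    obtain ⟨c, hc⟩ := huniq y' hmv'
    refine ⟨c, ?_, hc⟩
    intro h0
    apply hy'
    rw [hc, h0, zero_smul]
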